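/- For all x ≥ e the principal branch W of the Lambert W function satisfies ln x − ln(ln x) ≤ W(x) ≤ ln x − (1/2) ln(ln x), and equality (on either side) holds if and only if x = e. -/
import Mathlib


/-- for all x ≥ e the principal branch W of the Lambert W function satisfies
ln x − ln(ln x) ≤ W(x) ≤ ln x − (1/2) ln(ln x), with equality (on either side) iff x = e. -/
theorem lambert_log_bounds (W : ℝ → ℝ) (hW_nonneg : ∀ x : ℝ, 0 ≤ x → 0 ≤ W x)
    (hW : ∀ x : ℝ, 0 ≤ x → W x * Real.exp (W x) = x) :
    ∀ x : ℝ, Real.exp 1 ≤ x →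
      (Real.log x - Real.log (Real.log x) ≤ W x ∧
        W x ≤ Real.log x - (1 / 2) * Real.log (Real.log x) ∧
        (Real.log x - Real.log (Real.log x) = W x ↔ x = Real.exp 1) ∧
        (W x = Real.log x - (1 / 2) * Real.log (Real.log x) ↔ x = Real.exp 1)) := by
  intro x hx
  have he : (0:ℝ) < Real.exp 1 := Real.exp_pos 1
  have hx0 : 0 ≤ x := le_trans he.le hx
  set w := W x with hwdef
  have hw0 : 0 ≤ w := hW_nonneg x hx0
  have heq : w * Real.exp w = x := hW x hx0
  have hwpos : 0 < w := by
    rcases hw0.lt_or_eq with h | h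
    · exact h
    · exfalso; rw [← h, zero_mul] at heq; linarith
  have hw1 : 1 ≤ w := by
    by_contra h
    push_neg at h
    have h2 : Real.exp w < Real.exp 1 := Real.exp_lt_exp.2 h
    have h3 := Real.exp_pos w
    nlinarith
  have hlogx : Real.log x = w + Real.log w := by
    rw [← heq, Real.log_mul (ne_of_gt hwpos) (Real.exp_ne_zero w), Real.log_exp]; ring
  have hlw0 : 0 ≤ Real.log w := Real.log_nonneg hw1
  have hLpos : 0 < Real.log x := by rw [hlogx]; linarith
  rcases eq_or_lt_of_le hw1 with h1 | h1
  · -- w = 1, so x = e and everything is equality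
    have hx' : x = Real.exp 1 := by rw [← heq, ← h1, one_mul]
    have hl1 : Real.log x = 1 := by rw [hx', Real.log_exp]
    have hll : Real.log (Real.log x) = 0 := by rw [hl1, Real.log_one]
    refine ⟨by linarith, by linarith, ⟨fun _ => hx', fun _ => by linarith⟩,
      ⟨fun _ => hx', fun _ => by linarith⟩⟩
  · -- w > 1, strict inequalities everywhere, x ≠ e
    have hlwpos : 0 < Real.log w := Real.log_pos h1
    have hlow : Real.log w < Real.log (Real.log x) := by
      rw [hlogx]; exact Real.log_lt_log hwpos (by linarith)
    have hsq : Real.log x < w ^ 2 := by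
      have := Real.log_lt_sub_one_of_pos hwpos (ne_of_gt h1)
      nlinarith
    have hup : Real.log (Real.log x) < 2 * Real.log w := by
      have h2 : Real.log (Real.log x) < Real.log (w ^ 2) := Real.log_lt_log hLpos hsq
      rwa [Real.log_pow, Nat.cast_ofNat] at h2
    have hxne : x ≠ Real.exp 1 := by
      intro hc
      have h2 : Real.exp 1 < Real.exp w := Real.exp_lt_exp.2 h1
      nlinarith
    refine ⟨by linarith, by linarith,
      ⟨fun h => absurd h (by linarith), fun h => absurd h hxne⟩,
      ⟨fun h => absurd h (by linarith), fun h => absurd h hxne⟩⟩
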